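/- arXiv:1710.11399 — 4 statements merged into one kernel-verified Lean document; each statement's English description precedes it below -/
import Mathlib

section
/- (Remark 5.1, Coulomb gauge) Let s be a real number with 3/4 ≤ s ≤ 1. Define the sequence (t_k)_{k≥1} by t_1 = 3/4 − s/3 − s²/3 and t_{k+1} = (1−s)(5/6 − t_k + (1−s)/3) + t_k/2, and set t_∞ = (7/3 − 2s/3)(1−s)/(3−2s). Then for every k ≥ 1: (1−s)/3 ≤ t_∞ < t_k ≤ t_1 ≤ 1/2, and moreover t_k > 1 − s. -/
/-- Remark 5.1 (Coulomb gauge): for every `k ≥ 1`,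
`(1−s)/3 ≤ t_∞ < t_k ≤ t_1 ≤ 1/2`, and moreover `t_k > 1 − s`. -/
theorem stmt5 (s : ℝ) (hs1 : 3/4 ≤ s) (hs2 : s ≤ 1)
    (t : ℕ → ℝ) (h1 : t 1 = 3/4 - s/3 - s^2/3)
    (hrec : ∀ k, 1 ≤ k → t (k+1) = (1 - s) * (5/6 - t k + (1 - s)/3) + t k / 2) :
    ∀ k, 1 ≤ k →
      (1 - s)/3 ≤ (7/3 - 2*s/3) * (1 - s) / (3 - 2*s) ∧
      (7/3 - 2*s/3) * (1 - s) / (3 - 2*s) < t k ∧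
      t k ≤ t 1 ∧ t 1 ≤ 1/2 ∧ t k > 1 - s := by
  have h32 : (0:ℝ) < 3 - 2*s := by linarith
  set T : ℝ := (7/3 - 2*s/3) * (1 - s) / (3 - 2*s) with hT
  have hTfix : (1 - s) * (5/6 - T + (1 - s)/3) + T / 2 = T := by
    rw [hT]; field_simp [show (3:ℝ) - s*2 ≠ 0 by linarith]; ring
  have hT1 : T < t 1 := by
    rw [h1, hT, div_lt_iff₀ h32]
    nlinarith [sq_nonneg (s - 3/4), sq_nonneg (1 - s), mul_nonneg (mul_nonneg (by linarith : (0:ℝ) ≤ 1 - s) (by linarith : (0:ℝ) ≤ 1 - s)) (by linarith : (0:ℝ) ≤ 1 - s)]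
  have key : ∀ k, 1 ≤ k → T < t k ∧ t k ≤ t 1 := by
    intro k hk
    induction k with
    | zero => omega
    | succ n ih =>
      rcases Nat.eq_zero_or_pos n with rfl | hn
      · exact ⟨hT1, le_refl _⟩
      · obtain ⟨hlt, hle⟩ := ih hn
        have hstep : t (n+1) - T = (s - 1/2) * (t n - T) := by
          rw [hrec n hn]; linear_combination hTfix
        constructor
        · nlinarith
        · nlinarith
  have hTa : 1 - s ≤ T := by
    rw [hT, le_div_iff₀ h32]
    nlinarith [mul_nonneg (by linarith : (0:ℝ) ≤ 1 - s) (by linarith : (0:ℝ) ≤ 4*s - 2)]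
  have hT3 : (1 - s)/3 ≤ T := by
    rw [hT, le_div_iff₀ h32]
    nlinarith [mul_nonneg (by linarith : (0:ℝ) ≤ 1 - s) (by linarith : (0:ℝ) ≤ s)]
  intro k hk
  obtain ⟨hlt, hle⟩ := key k hk
  refine ⟨hT3, hlt, hle, by rw [h1]; nlinarith, by linarith⟩
end

section
/- (Lemma A.3, Lorenz gauge) Let s be a real number with 9/10 < s ≤ 1. Define the sequences (ρ_k)_{k≥1} and (σ_k)_{k≥1} by σ_1 = (3/2 − s/3 − s²)/(1+s), ρ_1 = (7/2 + s − 4s²)/6, ρ_{k+1} = (7/3 − 3s + 2s²/3 + (2s−1)σ_k)/2 and σ_{k+1} = (19/6 − 25s/6 + s² + (3s−2)ρ_{k+1})/(1+s) for k ≥ 1, and set ρ_∞ = ((7/3 − 3s + 2s²/3)(1+s) + (2s−1)(19/6 − 25s/6 + s²))/(2(1+s) − (3s−2)(2s−1)). Then ρ_k > ρ_∞ for every k ≥ 1. -/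
private lemma mkgAux_D (s : ℝ) (hs1 : 9/10 < s) (hs2 : s ≤ 1) :
    (0:ℝ) < 2 * (1 + s) - (3*s - 2) * (2*s - 1) := by nlinarith

private lemma mkgAux_fix (s : ℝ) (hs1 : 9/10 < s) (hs2 : s ≤ 1) :
    ((7/3 - 3*s + 2*s^2/3) * (1 + s) + (2*s - 1) * (19/6 - 25*s/6 + s^2))
      / (2 * (1 + s) - (3*s - 2) * (2*s - 1))
    = (7/3 - 3*s + 2*s^2/3 + (2*s - 1) *
        ((19/6 - 25*s/6 + s^2 + (3*s - 2) *
          (((7/3 - 3*s + 2*s^2/3) * (1 + s) + (2*s - 1) * (19/6 - 25*s/6 + s^2))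
            / (2 * (1 + s) - (3*s - 2) * (2*s - 1)))) / (1 + s))) / 2 := by
  have hD := mkgAux_D s hs1 hs2
  have h1s : (0:ℝ) < 1 + s := by linarith
  have hD' : 2 * (1 + s) - (3*s - 2) * (2*s - 1) ≠ 0 := hD.ne'
  have h1s' : 1 + s ≠ 0 := h1s.ne'
  generalize hDd : 2 * (1 + s) - (3*s - 2) * (2*s - 1) = D at hD' ⊢
  field_simp
  rw [← hDd]
  ring

private lemma mkgAux_Sval (s : ℝ) (hs1 : 9/10 < s) (hs2 : s ≤ 1) :
    (19/6 - 25*s/6 + s^2 + (3*s - 2) *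
      (((7/3 - 3*s + 2*s^2/3) * (1 + s) + (2*s - 1) * (19/6 - 25*s/6 + s^2))
        / (2 * (1 + s) - (3*s - 2) * (2*s - 1)))) / (1 + s)
    = ((19/6 - 25*s/6 + s^2) * (2 * (1 + s) - (3*s - 2) * (2*s - 1))
      + (3*s - 2) * ((7/3 - 3*s + 2*s^2/3) * (1 + s) + (2*s - 1) * (19/6 - 25*s/6 + s^2)))
      / ((1 + s) * (2 * (1 + s) - (3*s - 2) * (2*s - 1))) := by
  have hD := mkgAux_D s hs1 hs2
  have h1s : (0:ℝ) < 1 + s := by linarith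
  have hD' : 2 * (1 + s) - (3*s - 2) * (2*s - 1) ≠ 0 := hD.ne'
  have h1s' : 1 + s ≠ 0 := h1s.ne'
  generalize hDd : 2 * (1 + s) - (3*s - 2) * (2*s - 1) = D at hD' ⊢
  field_simp

private lemma mkgAux_base1 (s : ℝ) (hs1 : 9/10 < s) (hs2 : s ≤ 1) :
    ((7/3 - 3*s + 2*s^2/3) * (1 + s) + (2*s - 1) * (19/6 - 25*s/6 + s^2))
      / (2 * (1 + s) - (3*s - 2) * (2*s - 1)) < (7/2 + s - 4*s^2) / 6 := by
  have hD := mkgAux_D s hs1 hs2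
  rw [div_lt_div_iff₀ hD (by norm_num)]
  nlinarith [sq_nonneg (s-1), sq_nonneg (s - 9/10),
    mul_nonneg (le_of_lt (sub_pos.2 hs1)) (sub_nonneg.2 hs2),
    mul_nonneg (mul_nonneg (le_of_lt (sub_pos.2 hs1)) (sub_nonneg.2 hs2)) (le_of_lt (sub_pos.2 hs1)),
    sq_nonneg ((s-1)*(s-9/10))]

private lemma mkgAux_base2 (s : ℝ) (hs1 : 9/10 < s) (hs2 : s ≤ 1) :
    ((19/6 - 25*s/6 + s^2) * (2 * (1 + s) - (3*s - 2) * (2*s - 1))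
      + (3*s - 2) * ((7/3 - 3*s + 2*s^2/3) * (1 + s) + (2*s - 1) * (19/6 - 25*s/6 + s^2)))
      / ((1 + s) * (2 * (1 + s) - (3*s - 2) * (2*s - 1)))
    < (3/2 - s/3 - s^2) / (1 + s) := by
  have hD := mkgAux_D s hs1 hs2
  have h1s : (0:ℝ) < 1 + s := by linarith
  rw [div_lt_div_iff₀ (mul_pos h1s hD) h1s]
  nlinarith [sq_nonneg (s-1), sq_nonneg (s - 9/10),
    mul_nonneg (le_of_lt (sub_pos.2 hs1)) (sub_nonneg.2 hs2),
    mul_nonneg (mul_nonneg (le_of_lt (sub_pos.2 hs1)) (sub_nonneg.2 hs2)) (le_of_lt (sub_pos.2 hs1)),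
    mul_nonneg (mul_nonneg (le_of_lt (sub_pos.2 hs1)) (sub_nonneg.2 hs2)) (sub_nonneg.2 hs2),
    sq_nonneg ((s-1)*(s-9/10))]



/-- Lemma A.3 (Lorenz gauge): the iteration `ρ_k` stays strictly above `ρ_∞`. -/
theorem stmt11 (s : ℝ) (hs1 : 9/10 < s) (hs2 : s ≤ 1)
    (ρ σ : ℕ → ℝ)
    (hσ1 : σ 1 = (3/2 - s/3 - s^2) / (1 + s))
    (hρ1 : ρ 1 = (7/2 + s - 4*s^2) / 6)
    (hρ : ∀ k, 1 ≤ k → ρ (k+1) = (7/3 - 3*s + 2*s^2/3 + (2*s - 1) * σ k) / 2)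
    (hσ : ∀ k, 1 ≤ k → σ (k+1) = (19/6 - 25*s/6 + s^2 + (3*s - 2) * ρ (k+1)) / (1 + s)) :
    ∀ k, 1 ≤ k →
      ρ k > ((7/3 - 3*s + 2*s^2/3) * (1 + s) + (2*s - 1) * (19/6 - 25*s/6 + s^2))
              / (2 * (1 + s) - (3*s - 2) * (2*s - 1)) := by
  have hD : (0:ℝ) < 2 * (1 + s) - (3*s - 2) * (2*s - 1) := mkgAux_D s hs1 hs2
  have h1s : (0:ℝ) < 1 + s := by linarith
  have h21 : (0:ℝ) < 2*s - 1 := by linarith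
  have h32 : (0:ℝ) < 3*s - 2 := by linarith
  obtain ⟨R, hR⟩ : ∃ R : ℝ, R = ((7/3 - 3*s + 2*s^2/3) * (1 + s) + (2*s - 1) * (19/6 - 25*s/6 + s^2))
      / (2 * (1 + s) - (3*s - 2) * (2*s - 1)) := ⟨_, rfl⟩
  obtain ⟨S, hS⟩ : ∃ S : ℝ, S = (19/6 - 25*s/6 + s^2 + (3*s - 2) * R) / (1 + s) := ⟨_, rfl⟩
  have hfixρ : R = (7/3 - 3*s + 2*s^2/3 + (2*s - 1) * S) / 2 := by
    rw [hS, hR]; exact mkgAux_fix s hs1 hs2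
  have hρ1R : ρ 1 > R := by
    rw [hρ1, hR]; exact mkgAux_base1 s hs1 hs2
  have hσ1S : σ 1 > S := by
    rw [hσ1, hS, hR, mkgAux_Sval s hs1 hs2]; exact mkgAux_base2 s hs1 hs2
  have key : ∀ k, 1 ≤ k → ρ k > R ∧ σ k > S := by
    intro k hk
    induction k with
    | zero => omega
    | succ n ih =>
      rcases Nat.lt_or_ge 1 (n+1) with h | h
      · have hn : 1 ≤ n := by omega
        obtain ⟨_, hσn⟩ := ih hn
        have hρn1 : ρ (n+1) > R := by
          rw [hρ n hn, hfixρ, gt_iff_lt,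
            div_lt_div_iff₀ (by norm_num : (0:ℝ) < 2) (by norm_num : (0:ℝ) < 2)]
          nlinarith [mul_pos h21 (sub_pos.2 hσn)]
        refine ⟨hρn1, ?_⟩
        rw [hσ n hn, hS, gt_iff_lt, div_lt_div_iff₀ h1s h1s]
        nlinarith [mul_pos (mul_pos h32 (sub_pos.2 hρn1)) h1s]
      · have : n = 0 := by omega
        subst this
        exact ⟨hρ1R, hσ1S⟩
  intro k hk
  rw [← hR]
  exact (key k hk).1
end

section
/- (Lemma A.4, Lorenz gauge) Let s be a real number with 9/10 < s ≤ 1. Define the sequences (ρ_k)_{k≥1} and (σ_k)_{k≥1} by σ_1 = (3/2 − s/3 − s²)/(1+s), ρ_1 = (7/2 + s − 4s²)/6, ρ_{k+1} = (7/3 − 3s + 2s²/3 + (2s−1)σ_k)/2 and σ_{k+1} = (19/6 − 25s/6 + s² + (3s−2)ρ_{k+1})/(1+s) for k ≥ 1. Then ρ_{k+1} ≤ ρ_k for every k ≥ 1. -/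
/-- Lemma A.4 (Lorenz gauge): the iteration `ρ_k` is monotonically decreasing. -/
theorem stmt12 (s : ℝ) (hs1 : 9/10 < s) (hs2 : s ≤ 1)
    (ρ σ : ℕ → ℝ)
    (hσ1 : σ 1 = (3/2 - s/3 - s^2) / (1 + s))
    (hρ1 : ρ 1 = (7/2 + s - 4*s^2) / 6)
    (hρ : ∀ k, 1 ≤ k → ρ (k+1) = (7/3 - 3*s + 2*s^2/3 + (2*s - 1) * σ k) / 2)
    (hσ : ∀ k, 1 ≤ k → σ (k+1) = (19/6 - 25*s/6 + s^2 + (3*s - 2) * ρ (k+1)) / (1 + s)) :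
    ∀ k, 1 ≤ k → ρ (k+1) ≤ ρ k := by
  have hs : (0:ℝ) < 1 + s := by linarith
  have key : ∀ k, 1 ≤ k → ρ (k+1) ≤ ρ k ∧ σ (k+1) ≤ σ k := by
    intro k hk
    induction k, hk using Nat.le_induction with
    | base =>
      have h2 : ρ 2 = (7/3 - 3*s + 2*s^2/3 + (2*s - 1) * σ 1) / 2 := hρ 1 le_rfl
      have h3 : σ 2 = (19/6 - 25*s/6 + s^2 + (3*s - 2) * ρ 2) / (1 + s) := hσ 1 le_rfl
      rw [hσ1] at h2
      constructor
      · rw [h2, hρ1, div_le_div_iff₀ (by norm_num) (by norm_num)]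
        have : (2*s - 1) * ((3/2 - s/3 - s^2) / (1 + s)) * (1+s)
            = (2*s-1) * (3/2 - s/3 - s^2) := by field_simp
        nlinarith [sq_nonneg (s-1), sq_nonneg s, mul_pos hs hs]
      · rw [h3, h2, hσ1]
        rw [div_le_div_iff₀ hs hs]
        have h4 : ((3/2 - s/3 - s^2) / (1 + s)) * (1+s) = 3/2 - s/3 - s^2 := by
          field_simp
        nlinarith [sq_nonneg (s-1), mul_pos hs hs, sq_nonneg ((s-1)*(1+s))]
    | succ n hn ih =>
      have hρ2 : ρ (n+2) = (7/3 - 3*s + 2*s^2/3 + (2*s - 1) * σ (n+1)) / 2 :=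
        hρ (n+1) (by omega)
      have hρ1' : ρ (n+1) = (7/3 - 3*s + 2*s^2/3 + (2*s - 1) * σ n) / 2 := hρ n hn
      have hσ2 : σ (n+2) = (19/6 - 25*s/6 + s^2 + (3*s - 2) * ρ (n+2)) / (1 + s) :=
        hσ (n+1) (by omega)
      have hσ1' : σ (n+1) = (19/6 - 25*s/6 + s^2 + (3*s - 2) * ρ (n+1)) / (1 + s) :=
        hσ n hn
      have hr : ρ (n+2) ≤ ρ (n+1) := by
        rw [hρ2, hρ1']
        have : (2*s - 1) * σ (n+1) ≤ (2*s - 1) * σ n := by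
          apply mul_le_mul_of_nonneg_left ih.2 (by linarith)
        linarith
      refine ⟨hr, ?_⟩
      rw [hσ2, hσ1', div_le_div_iff₀ hs hs]
      nlinarith [mul_le_mul_of_nonneg_left hr (show (0:ℝ) ≤ 3*s - 2 by linarith)]
  exact fun k hk => (key k hk).1
end

section
/- (Lemma A.5, Lorenz gauge) Let s be a real number with 9/10 < s ≤ 1. Define the sequences (ρ_k)_{k≥1} and (σ_k)_{k≥1} by σ_1 = (3/2 − s/3 − s²)/(1+s), ρ_1 = (7/2 + s − 4s²)/6, ρ_{k+1} = (7/3 − 3s + 2s²/3 + (2s−1)σ_k)/2 and σ_{k+1} = (19/6 − 25s/6 + s² + (3s−2)ρ_{k+1})/(1+s) for k ≥ 1. Then for every k ≥ 1: 1/2 > σ_k > (3/2)(1−s) and 1/2 > ρ_k > 1 − s. -/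
/-- Lemma A.5 (Lorenz gauge): for every `k ≥ 1`,
`1/2 > σ_k > (3/2)(1−s)` and `1/2 > ρ_k > 1 − s`. -/
theorem stmt14 (s : ℝ) (hs1 : 9/10 < s) (hs2 : s ≤ 1)
    (ρ σ : ℕ → ℝ)
    (hσ1 : σ 1 = (3/2 - s/3 - s^2) / (1 + s))
    (hρ1 : ρ 1 = (7/2 + s - 4*s^2) / 6)
    (hρ : ∀ k, 1 ≤ k → ρ (k+1) = (7/3 - 3*s + 2*s^2/3 + (2*s - 1) * σ k) / 2)
    (hσ : ∀ k, 1 ≤ k → σ (k+1) = (19/6 - 25*s/6 + s^2 + (3*s - 2) * ρ (k+1)) / (1 + s)) :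
    ∀ k, 1 ≤ k →
      (1/2 > σ k ∧ σ k > (3/2) * (1 - s)) ∧ (1/2 > ρ k ∧ ρ k > 1 - s) := by
  have hs : (0:ℝ) < 1 + s := by linarith
  intro k hk
  induction k, hk using Nat.le_induction with
  | base =>
    rw [hσ1, hρ1]
    refine ⟨⟨?_, ?_⟩, ?_, ?_⟩
    · rw [gt_iff_lt, div_lt_iff₀ hs]; nlinarith
    · rw [gt_iff_lt, lt_div_iff₀ hs]; nlinarith
    · nlinarith
    · nlinarith
  | succ n hn ih =>
    obtain ⟨⟨hσu, hσl⟩, -, -⟩ := ih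
    have hρn : ρ (n+1) = (7/3 - 3*s + 2*s^2/3 + (2*s - 1) * σ n) / 2 := hρ n hn
    have hρu : ρ (n+1) < 1/2 := by rw [hρn]; nlinarith
    have hρl : ρ (n+1) > 1 - s := by rw [hρn]; nlinarith
    have hσn := hσ n hn
    refine ⟨⟨?_, ?_⟩, hρu, hρl⟩
    · rw [hσn, gt_iff_lt, div_lt_iff₀ hs]; nlinarith
    · rw [hσn, gt_iff_lt, lt_div_iff₀ hs]; nlinarith
end
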